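/- Let K be a connected simple graph on a linearly ordered vertex type V, let T be a set of 2-simplices of K, and let w be the constant weight function assigning 1 to every edge of K. Then for any two spanning trees A and B of K, the weighted fundamental groups π₁(K, w, A) and π₁(K, w, B) (both formed with the same T) are isomorphic. -/

import Mathlib

open scoped Classical

variable {V : Type*}

/-- Generators of the weighted fundamental group: edges `ab` of `K` with `a < b`. -/
def WGen [LinearOrder V] (K : SimpleGraph V) : Type _ :=
  {p : V × V // p.1 < p.2 ∧ K.Adj p.1 p.2}

/-- The relators of the weighted fundamental group: (1) `g_{ab}^{w(ab)}` for edges of the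
spanning tree `A`; (2) `g_{ab}^{w(ab)} · (g_{av}^{w(av)} · g_{vb}^{w(vb)})⁻¹` for 2-simplices
`{a, v, b} ∈ T` with `a < v < b`. -/
def WRelators [LinearOrder V] (K : SimpleGraph V) (T : Set (Finset V))
    (w : Sym2 V → ℤ) (A : SimpleGraph V) : Set (FreeGroup (WGen K)) :=
  {r | ∃ e : WGen K, A.Adj e.1.1 e.1.2 ∧ r = FreeGroup.of e ^ w s(e.1.1, e.1.2)} ∪
  {r | ∃ (a v b : V) (hav : a < v) (hvb : v < b)
       (h1 : K.Adj a v) (h2 : K.Adj v b) (h3 : K.Adj a b),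
       ({a, v, b} : Finset V) ∈ T ∧
       r = FreeGroup.of (⟨(a, b), hav.trans hvb, h3⟩ : WGen K) ^ w s(a, b) *
         (FreeGroup.of (⟨(a, v), hav, h1⟩ : WGen K) ^ w s(a, v) *
          FreeGroup.of (⟨(v, b), hvb, h2⟩ : WGen K) ^ w s(v, b))⁻¹}

/-- The weighted fundamental group `π₁(K, w, A)` of the WSC `(K, T, w, A)`,
as a presented group. -/
def wpi1 [LinearOrder V] (K : SimpleGraph V) (T : Set (Finset V))
    (w : Sym2 V → ℤ) (A : SimpleGraph V) : Type _ :=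
  PresentedGroup (WRelators K T w A)

noncomputable instance [LinearOrder V] (K : SimpleGraph V) (T : Set (Finset V))
    (w : Sym2 V → ℤ) (A : SimpleGraph V) : Group (wpi1 K T w A) := by
  unfold wpi1; infer_instance

/-- `(K, T, w, A)` is a weighted simplicial complex: `K` is a connected simple graph,
`T` is a set of 2-simplices (unordered triples of distinct pairwise adjacent vertices),
and `A` is a spanning tree of `K`. -/
structure IsWSC (K : SimpleGraph V) (T : Set (Finset V))
    (w : Sym2 V → ℤ) (A : SimpleGraph V) : Prop where
  conn : K.Connected
  tri : ∀ t ∈ T, ∃ a v b : V, a ≠ v ∧ v ≠ b ∧ a ≠ b ∧ t = {a, v, b} ∧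
        K.Adj a v ∧ K.Adj v b ∧ K.Adj a b
  tree : A.IsTree
  le : A ≤ K

/-- Exactly two of the three edges of every 2-simplex of `T` lie in the tree `A`. -/
def ExactlyTwo [LinearOrder V] (T : Set (Finset V)) (A : SimpleGraph V) : Prop :=
  ∀ a v b : V, a < v → v < b → ({a, v, b} : Finset V) ∈ T →
    ((if A.Adj a b then 1 else 0) + (if A.Adj a v then 1 else 0) +
      (if A.Adj v b then 1 else 0) : ℕ) = 2

set_option linter.unusedSectionVars false

namespace WPi1Aux

open SimpleGraph

variable {Γ : Type*} [Group Γ] {G : SimpleGraph V}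

/-- The word in `Γ` associated to a walk, given elements attached to oriented edges. -/
def wordOf (f : ∀ ⦃u v : V⦄, G.Adj u v → Γ) : ∀ {u v : V}, G.Walk u v → Γ
  | _, _, SimpleGraph.Walk.nil => 1
  | _, _, SimpleGraph.Walk.cons h w => f h * wordOf f w

@[simp] lemma wordOf_nil (f : ∀ ⦃u v : V⦄, G.Adj u v → Γ) {u : V} :
    wordOf f (SimpleGraph.Walk.nil : G.Walk u u) = 1 := rfl

@[simp] lemma wordOf_cons (f : ∀ ⦃u v : V⦄, G.Adj u v → Γ) {u v w : V}
    (h : G.Adj u v) (p : G.Walk v w) :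
    wordOf f (SimpleGraph.Walk.cons h p) = f h * wordOf f p := rfl

lemma wordOf_append (f : ∀ ⦃u v : V⦄, G.Adj u v → Γ) {u v w : V}
    (p : G.Walk u v) (q : G.Walk v w) :
    wordOf f (p.append q) = wordOf f p * wordOf f q := by
  induction p with
  | nil => simp
  | cons h p ih => simp [ih, mul_assoc]

lemma wordOf_concat (f : ∀ ⦃u v : V⦄, G.Adj u v → Γ) {u v w : V}
    (p : G.Walk u v) (h : G.Adj v w) :
    wordOf f (p.concat h) = wordOf f p * f h := by
  simp [SimpleGraph.Walk.concat_eq_append, wordOf_append]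

/-- The unique path between two vertices of a tree. -/
noncomputable def treePath (hG : G.IsTree) (u v : V) : G.Walk u v :=
  (hG.existsUnique_path u v).choose

lemma treePath_isPath (hG : G.IsTree) (u v : V) : (treePath hG u v).IsPath :=
  (hG.existsUnique_path u v).choose_spec.1

lemma treePath_unique (hG : G.IsTree) {u v : V} {p : G.Walk u v} (hp : p.IsPath) :
    p = treePath hG u v :=
  ((hG.existsUnique_path u v).unique hp (treePath_isPath hG u v))

@[simp] lemma treePath_self (hG : G.IsTree) (v : V) :
    treePath hG v v = SimpleGraph.Walk.nil :=
  (treePath_unique hG (SimpleGraph.Walk.IsPath.nil)).symm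

/-- The word along the tree path from `v₀` to `v`. -/
noncomputable def treeWord (f : ∀ ⦃u v : V⦄, G.Adj u v → Γ) (hG : G.IsTree) (v₀ v : V) : Γ :=
  wordOf f (treePath hG v₀ v)

@[simp] lemma treeWord_self (f : ∀ ⦃u v : V⦄, G.Adj u v → Γ) (hG : G.IsTree) (v₀ : V) :
    treeWord f hG v₀ v₀ = 1 := by
  simp [treeWord]

lemma treeWord_adj (f : ∀ ⦃u v : V⦄, G.Adj u v → Γ)
    (hf : ∀ ⦃u v : V⦄ (h : G.Adj u v), f h.symm = (f h)⁻¹)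
    (hG : G.IsTree) (v₀ : V) {a b : V} (hab : G.Adj a b) :
    treeWord f hG v₀ b = treeWord f hG v₀ a * f hab := by
  by_cases hmem : a ∈ (treePath hG v₀ b).support
  · -- split the path to b at a
    have hsplit := (treePath hG v₀ b).take_spec hmem
    have htake : ((treePath hG v₀ b).takeUntil a hmem) = treePath hG v₀ a :=
      treePath_unique hG ((treePath_isPath hG v₀ b).takeUntil hmem)
    have hdrop : ((treePath hG v₀ b).dropUntil a hmem) =
        SimpleGraph.Walk.cons hab SimpleGraph.Walk.nil := by
      have h1 : ((treePath hG v₀ b).dropUntil a hmem).IsPath :=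
        (treePath_isPath hG v₀ b).dropUntil hmem
      have := hG.IsAcyclic.path_unique ⟨_, h1⟩ (SimpleGraph.Path.singleton hab)
      simpa [SimpleGraph.Path.singleton] using congrArg Subtype.val this
    calc treeWord f hG v₀ b = wordOf f (treePath hG v₀ b) := rfl
      _ = wordOf f (((treePath hG v₀ b).takeUntil a hmem).append
            ((treePath hG v₀ b).dropUntil a hmem)) := by rw [hsplit]
      _ = treeWord f hG v₀ a * f hab := by
            rw [wordOf_append, htake, hdrop]
            simp [treeWord]
  · -- extend the path to b by the edge b→a
    have hpath : ((treePath hG v₀ b).concat hab.symm).IsPath := by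
      rw [← SimpleGraph.Walk.isPath_reverse_iff, SimpleGraph.Walk.reverse_concat]
      exact ((treePath_isPath hG v₀ b).reverse).cons (by simpa using hmem)
    have := treePath_unique hG hpath
    have hw : treeWord f hG v₀ a = treeWord f hG v₀ b * f hab.symm := by
      rw [treeWord, ← this, wordOf_concat]; rfl
    rw [hw, hf hab, mul_assoc, inv_mul_cancel, mul_one]



variable [LinearOrder V]

/-- The presented group `π₁(K, 1, A)` (on the `PresentedGroup` level). -/
abbrev PG (K : SimpleGraph V) (T : Set (Finset V)) (A : SimpleGraph V) :=
  PresentedGroup (WRelators K T (fun _ => (1 : ℤ)) A)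

lemma mk_rel_one {K : SimpleGraph V} {T : Set (Finset V)} {A : SimpleGraph V}
    {r : FreeGroup (WGen K)} (hr : r ∈ WRelators K T (fun _ => (1 : ℤ)) A) :
    (QuotientGroup.mk r : PG K T A) = 1 :=
  (QuotientGroup.eq_one_iff r).mpr (Subgroup.subset_normalClosure hr)

lemma of_tree_edge {K : SimpleGraph V} {T : Set (Finset V)} {A : SimpleGraph V}
    {a b : V} (hadj : A.Adj a b) (hab : a < b) (hK : K.Adj a b) :
    (PresentedGroup.of ⟨(a, b), hab, hK⟩ : PG K T A) = 1 := by
  have hr : (FreeGroup.of (⟨(a, b), hab, hK⟩ : WGen K)) ∈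
      WRelators K T (fun _ => (1 : ℤ)) A := by
    left
    exact ⟨⟨(a, b), hab, hK⟩, hadj, by simp; rfl⟩
  exact mk_rel_one hr

lemma of_triangle {K : SimpleGraph V} {T : Set (Finset V)} {A : SimpleGraph V}
    {a v b : V} (hav : a < v) (hvb : v < b)
    (h1 : K.Adj a v) (h2 : K.Adj v b) (h3 : K.Adj a b)
    (hT : ({a, v, b} : Finset V) ∈ T) :
    (PresentedGroup.of ⟨(a, b), hav.trans hvb, h3⟩ : PG K T A) =
      PresentedGroup.of ⟨(a, v), hav, h1⟩ * PresentedGroup.of ⟨(v, b), hvb, h2⟩ := by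
  have hr : (FreeGroup.of (⟨(a, b), hav.trans hvb, h3⟩ : WGen K) *
      (FreeGroup.of (⟨(a, v), hav, h1⟩ : WGen K) *
        FreeGroup.of (⟨(v, b), hvb, h2⟩ : WGen K))⁻¹) ∈
      WRelators K T (fun _ => (1 : ℤ)) A := by
    right
    exact ⟨a, v, b, hav, hvb, h1, h2, h3, hT, by simp; rfl⟩
  have := mk_rel_one (K := K) (T := T) (A := A) hr
  have h' : (PresentedGroup.of (⟨(a, b), hav.trans hvb, h3⟩ : WGen K) : PG K T A) *
      ((PresentedGroup.of (⟨(a, v), hav, h1⟩ : WGen K) : PG K T A) *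
        (PresentedGroup.of (⟨(v, b), hvb, h2⟩ : WGen K) : PG K T A))⁻¹ = 1 := this
  rw [mul_inv_eq_one] at h'
  exact h'

/-- The canonical element of `π₁(K,1,A)` attached to an oriented edge of `K`. -/
noncomputable def edgeElt (K : SimpleGraph V) (T : Set (Finset V)) (A : SimpleGraph V) :
    ∀ ⦃u v : V⦄, K.Adj u v → PG K T A := fun u v h =>
  if huv : u < v then PresentedGroup.of ⟨(u, v), huv, h⟩
  else (PresentedGroup.of ⟨(v, u), lt_of_le_of_ne (not_lt.mp huv) h.ne', h.symm⟩)⁻¹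

lemma edgeElt_of_lt {K : SimpleGraph V} (T : Set (Finset V)) (A : SimpleGraph V)
    {u v : V} (huv : u < v) (h : K.Adj u v) :
    edgeElt K T A h = PresentedGroup.of ⟨(u, v), huv, h⟩ := dif_pos huv

lemma edgeElt_symm {K : SimpleGraph V} (T : Set (Finset V)) (A : SimpleGraph V)
    {u v : V} (h : K.Adj u v) :
    edgeElt K T A h.symm = (edgeElt K T A h)⁻¹ := by
  rcases lt_trichotomy u v with huv | rfl | hvu
  · rw [edgeElt_of_lt T A huv h, edgeElt, dif_neg (not_lt.mpr huv.le)]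
  · exact absurd rfl h.ne
  · rw [edgeElt_of_lt T A hvu h.symm, edgeElt, dif_neg (not_lt.mpr hvu.le), inv_inv]

lemma edgeElt_tree_one {K : SimpleGraph V} (T : Set (Finset V)) {A : SimpleGraph V}
    {u v : V} (hadj : A.Adj u v) (h : K.Adj u v) :
    edgeElt K T A h = 1 := by
  rcases lt_trichotomy u v with huv | rfl | hvu
  · rw [edgeElt_of_lt T A huv h]; exact of_tree_edge hadj huv h
  · exact absurd rfl h.ne
  · have : edgeElt K T A h.symm.symm = (edgeElt K T A h.symm)⁻¹ := edgeElt_symm T A h.symm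
    rw [show h.symm.symm = h from rfl] at this
    rw [this, edgeElt_of_lt T A hvu h.symm, of_tree_edge hadj.symm hvu h.symm, inv_one]


section Transfer

open SimpleGraph

variable [LinearOrder V] (K : SimpleGraph V) (T : Set (Finset V)) (v₀ : V)
variable {A B : SimpleGraph V}

/-- The element of `π₁(K,1,B)` given by the word along the `A`-tree path from `v₀` to `v`. -/
noncomputable def vertElt (hA : A.IsTree) (hAK : A ≤ K) (v : V) : PG K T B :=
  treeWord (fun _ _ h => edgeElt K T B (hAK h)) hA v₀ v

@[simp] lemma vertElt_base (hA : A.IsTree) (hAK : A ≤ K) :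
    vertElt K T v₀ (B := B) hA hAK v₀ = 1 := treeWord_self _ _ _

lemma vertElt_adj (hA : A.IsTree) (hAK : A ≤ K) {a b : V} (hab : A.Adj a b) :
    vertElt K T v₀ (B := B) hA hAK b =
      vertElt K T v₀ (B := B) hA hAK a * edgeElt K T B (hAK hab) := by
  exact treeWord_adj _ (fun u v h => edgeElt_symm T B (hAK h)) hA v₀ hab

/-- The image of a generator under the transfer homomorphism. -/
noncomputable def genImage (hA : A.IsTree) (hAK : A ≤ K) (e : WGen K) : PG K T B :=
  vertElt K T v₀ (B := B) hA hAK e.1.1 * edgeElt K T B e.2.2 *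
    (vertElt K T v₀ (B := B) hA hAK e.1.2)⁻¹

lemma lift_relators (hA : A.IsTree) (hAK : A ≤ K) :
    ∀ r ∈ WRelators K T (fun _ => (1 : ℤ)) A,
      FreeGroup.lift (genImage K T v₀ (B := B) hA hAK) r = 1 := by
  rintro r (⟨e, hadj, rfl⟩ | ⟨a, v, b, hav, hvb, h1, h2, h3, hT, rfl⟩)
  · simp only [zpow_one, FreeGroup.lift_apply_of]
    have hrel := vertElt_adj K T v₀ (B := B) hA hAK hadj
    rw [genImage]
    have : edgeElt K T B (hAK hadj) = edgeElt K T B e.2.2 := rfl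
    rw [← this, ← hrel]
    exact mul_inv_cancel _
  · simp only [zpow_one, map_mul, map_inv, FreeGroup.lift_apply_of]
    change FreeGroup.lift (genImage K T v₀ (B := B) hA hAK)
      ((FreeGroup.of (α := WGen K) ⟨(a, b), hav.trans hvb, h3⟩) *
        ((FreeGroup.of (α := WGen K) ⟨(a, v), hav, h1⟩) *
          (FreeGroup.of (α := WGen K) ⟨(v, b), hvb, h2⟩))⁻¹) = 1
    rw [map_mul, map_inv, map_mul]
    erw [FreeGroup.lift_apply_of, FreeGroup.lift_apply_of, FreeGroup.lift_apply_of]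
    have htri := of_triangle (K := K) (T := T) (A := B) hav hvb h1 h2 h3 hT
    unfold genImage
    rw [edgeElt_of_lt T B (hav.trans hvb) h3, edgeElt_of_lt T B hav h1,
      edgeElt_of_lt T B hvb h2, htri]
    group

/-- The transfer homomorphism `π₁(K,1,A) →* π₁(K,1,B)`. -/
noncomputable def transferHom (hA : A.IsTree) (hAK : A ≤ K) : PG K T A →* PG K T B :=
  PresentedGroup.toGroup (lift_relators K T v₀ hA hAK)

@[simp] lemma transferHom_of (hA : A.IsTree) (hAK : A ≤ K) (e : WGen K) :
    transferHom K T v₀ (B := B) hA hAK (PresentedGroup.of e) =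
      genImage K T v₀ (B := B) hA hAK e :=
  PresentedGroup.toGroup.of _

lemma transferHom_edgeElt (hA : A.IsTree) (hAK : A ≤ K) (hB : B.IsTree) (hBK : B ≤ K)
    {u v : V} (h : K.Adj u v) :
    transferHom K T v₀ (A := B) (B := A) hB hBK (edgeElt K T B h) =
      vertElt K T v₀ (B := A) hB hBK u * edgeElt K T A h *
        (vertElt K T v₀ (B := A) hB hBK v)⁻¹ := by
  rcases lt_trichotomy u v with huv | rfl | hvu
  · rw [edgeElt_of_lt T B huv h]; erw [transferHom_of]; rfl
  · exact absurd rfl h.ne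
  · have h1 : edgeElt K T B h = (edgeElt K T B h.symm)⁻¹ := by
      rw [← edgeElt_symm T B h.symm]
    have h2 : edgeElt K T A h = (edgeElt K T A h.symm)⁻¹ := by
      rw [← edgeElt_symm T A h.symm]
    rw [h1, map_inv, edgeElt_of_lt T B hvu h.symm]; erw [transferHom_of]; unfold genImage; rw [h2]
    simp only [mul_inv_rev, inv_inv, mul_assoc]

lemma transferHom_vertElt (hA : A.IsTree) (hAK : A ≤ K) (hB : B.IsTree) (hBK : B ≤ K)
    (v : V) :
    transferHom K T v₀ (A := B) (B := A) hB hBK (vertElt K T v₀ (B := B) hA hAK v) =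
      (vertElt K T v₀ (B := A) hB hBK v)⁻¹ := by
  have key : ∀ {x y : V} (w : A.Walk x y),
      transferHom K T v₀ (A := B) (B := A) hB hBK
        (wordOf (fun _ _ h => edgeElt K T B (hAK h)) w) =
        vertElt K T v₀ (B := A) hB hBK x * (vertElt K T v₀ (B := A) hB hBK y)⁻¹ := by
    intro x y w
    induction w with
    | nil => simp
    | cons hadj p ih =>
      rw [wordOf_cons, map_mul, ih, transferHom_edgeElt K T v₀ hA hAK hB hBK,
        edgeElt_tree_one T hadj]
      group
  have h2 := key (treePath hA v₀ v)
  rw [show wordOf (fun _ _ h => edgeElt K T B (hAK h)) (treePath hA v₀ v) =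
    vertElt K T v₀ (B := B) hA hAK v from rfl] at h2
  rw [h2, vertElt_base, one_mul]

lemma transfer_comp (hA : A.IsTree) (hAK : A ≤ K) (hB : B.IsTree) (hBK : B ≤ K) :
    (transferHom K T v₀ (A := B) (B := A) hB hBK).comp
      (transferHom K T v₀ (A := A) (B := B) hA hAK) = MonoidHom.id (PG K T A) := by
  have hgen : ∀ e : WGen K,
      (transferHom K T v₀ (A := B) (B := A) hB hBK)
        ((transferHom K T v₀ (A := A) (B := B) hA hAK) (PresentedGroup.of e)) =
        PresentedGroup.of e := by
    intro e
    obtain ⟨⟨a, b⟩, hab, hK⟩ := e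
    erw [transferHom_of]; unfold genImage; rw [map_mul, map_mul, map_inv,
      transferHom_vertElt K T v₀ hA hAK hB hBK,
      transferHom_vertElt K T v₀ hA hAK hB hBK,
      transferHom_edgeElt K T v₀ hA hAK hB hBK]
    simp only [inv_inv]
    rw [edgeElt_of_lt T A hab hK]
    group
  ext x
  simpa using hgen x

end Transfer

end WPi1Aux


/-- Corollary 2.5. When all weights are `1`, the weighted fundamental group
is independent of the choice of spanning tree: for any two spanning trees `A`, `B` of `K`,
`π₁(K, 𝟙, A) ≅ π₁(K, 𝟙, B)`. -/
theorem weighted_pi1_weight_one_tree_indep [LinearOrder V] (K : SimpleGraph V)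
    (T : Set (Finset V)) (A B : SimpleGraph V)
    (hA : IsWSC K T (fun _ => 1) A) (hB : IsWSC K T (fun _ => 1) B) :
    Nonempty (wpi1 K T (fun _ => 1) A ≃* wpi1 K T (fun _ => 1) B) := by
  have : Nonempty V := hA.conn.nonempty
  let v₀ : V := Classical.arbitrary V
  refine ⟨MonoidHom.toMulEquiv
    (WPi1Aux.transferHom K T v₀ (A := A) (B := B) hA.tree hA.le)
    (WPi1Aux.transferHom K T v₀ (A := B) (B := A) hB.tree hB.le)
    ?_ ?_⟩
  · exact WPi1Aux.transfer_comp K T v₀ hA.tree hA.le hB.tree hB.le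
  · exact WPi1Aux.transfer_comp K T v₀ hB.tree hB.le hA.tree hA.le
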